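/- Let g : ℝ^d × P₂(ℝ^d) → ℝ be such that D_x g is Lipschitz continuous on ℝ^d × P₂(ℝ^d) (with the 2-Wasserstein distance on P₂(ℝ^d)). If g is displacement monotone, i.e. E[(D_x g(X¹, law(X¹)) − D_x g(X², law(X²))) · (X¹ − X²)] ≥ 0 for all square-integrable random variables X¹, X² with values in ℝ^d, then for every fixed μ ∈ P₂(ℝ^d) the function x ↦ g(x, μ) is convex on ℝ^d. -/

import Mathlib

open MeasureTheory Real Filter
open scoped RealInnerProductSpace Topology

noncomputable section

abbrev E (d : ℕ) := EuclideanSpace ℝ (Fin d)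

/-- A probability measure on `E d` with finite second moment. -/
def FiniteSecondMoment {d : ℕ} (μ : Measure (E d)) : Prop :=
  Integrable (fun x => ‖x‖ ^ 2) μ

/-- The 2-Wasserstein distance, defined through couplings. -/
def W2 {d : ℕ} (μ ν : Measure (E d)) : ℝ :=
  sInf { r | ∃ γ : Measure (E d × E d), IsProbabilityMeasure γ ∧
    γ.map Prod.fst = μ ∧ γ.map Prod.snd = ν ∧
    r = (∫ p, ‖p.1 - p.2‖ ^ 2 ∂γ) ^ (1 / 2 : ℝ) }

/-- The 1-Wasserstein distance, defined through couplings. -/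
def W1 {d : ℕ} (μ ν : Measure (E d)) : ℝ :=
  sInf { r | ∃ γ : Measure (E d × E d), IsProbabilityMeasure γ ∧
    γ.map Prod.fst = μ ∧ γ.map Prod.snd = ν ∧
    r = ∫ p, ‖p.1 - p.2‖ ∂γ }
-- auxiliary lemmas

lemma W2_nonneg {d : ℕ} (μ ν : Measure (E d)) : 0 ≤ W2 μ ν := by
  apply Real.sInf_nonneg
  rintro r ⟨γ, _, _, _, rfl⟩
  exact Real.rpow_nonneg (integral_nonneg fun p => by positivity) _

/-- the mixture measure `ε δ_x + (1-ε) μ` -/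
def mix {d : ℕ} (ε : ℝ) (x : E d) (μ : Measure (E d)) : Measure (E d) :=
  ENNReal.ofReal ε • Measure.dirac x + ENNReal.ofReal (1 - ε) • μ

lemma mix_prob {d : ℕ} {ε : ℝ} (hε : ε ∈ Set.Icc (0:ℝ) 1) (x : E d) {μ : Measure (E d)}
    (hμ : IsProbabilityMeasure μ) : IsProbabilityMeasure (mix ε x μ) := by
  constructor
  simp [mix, Measure.add_apply, Measure.smul_apply, hμ.measure_univ, smul_eq_mul, mul_one]
  rw [← ENNReal.ofReal_add hε.1 (by linarith [hε.2])]
  norm_num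

lemma mix_fsm {d : ℕ} {ε : ℝ} (x : E d) {μ : Measure (E d)}
    (h2 : FiniteSecondMoment μ) : FiniteSecondMoment (mix ε x μ) := by
  unfold FiniteSecondMoment mix
  refine Integrable.add_measure ?_ ?_
  · refine Integrable.smul_measure ?_ ENNReal.ofReal_ne_top
    refine ⟨(measurable_norm.pow_const 2).aestronglyMeasurable, ?_⟩
    rw [HasFiniteIntegral, lintegral_dirac]
    exact ENNReal.coe_lt_top
  · exact h2.smul_measure ENNReal.ofReal_ne_top

lemma integrable_sub_sq {d : ℕ} (x : E d) {μ : Measure (E d)} [IsProbabilityMeasure μ]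
    (h2 : FiniteSecondMoment μ) : Integrable (fun z => ‖x - z‖ ^ 2) μ := by
  have hid : MemLp (id : E d → E d) 2 μ := by
    rw [memLp_two_iff_integrable_sq_norm aestronglyMeasurable_id]
    simpa [FiniteSecondMoment] using h2
  have hc : MemLp (fun _ : E d => x) 2 μ := memLp_const x
  have := (hc.sub hid)
  rw [memLp_two_iff_integrable_sq_norm (this.aestronglyMeasurable)] at this
  exact this

lemma W2_mix_le {d : ℕ} {ε : ℝ} (hε : ε ∈ Set.Icc (0:ℝ) 1) (x : E d) {μ : Measure (E d)}
    (hμ : IsProbabilityMeasure μ) (h2 : FiniteSecondMoment μ) :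
    W2 (mix ε x μ) μ ≤ Real.sqrt (ε * ∫ z, ‖x - z‖ ^ 2 ∂μ) := by
  classical
  set a := ENNReal.ofReal ε with ha
  set b := ENNReal.ofReal (1 - ε) with hb
  have hdiag : Measurable (fun z : E d => (z, z)) := measurable_id.prodMk measurable_id
  set γ : Measure (E d × E d) :=
    a • (Measure.dirac x).prod μ + b • μ.map (fun z => (z, z)) with hγ
  have hprod : (Measure.dirac x).prod μ = μ.map (Prod.mk x) := Measure.dirac_prod x
  have hab : a + b = 1 := by
    rw [ha, hb, ← ENNReal.ofReal_add hε.1 (by linarith [hε.2])]; norm_num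
  have hγprob : IsProbabilityMeasure γ := by
    constructor
    have h1 : (Measure.dirac x).prod μ Set.univ = 1 := by
      rw [hprod, Measure.map_apply (measurable_prodMk_left) MeasurableSet.univ]
      simp [hμ.measure_univ]
    have h2' : μ.map (fun z : E d => (z, z)) Set.univ = 1 := by
      rw [Measure.map_apply hdiag MeasurableSet.univ]; simp [hμ.measure_univ]
    simp [hγ, Measure.add_apply, Measure.smul_apply, h1, h2', smul_eq_mul, mul_one, hab]
  have hfst : γ.map Prod.fst = mix ε x μ := by
    rw [hγ, Measure.map_add _ _ measurable_fst, Measure.map_smul, Measure.map_smul,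
      hprod, Measure.map_map measurable_fst measurable_prodMk_left,
      Measure.map_map measurable_fst hdiag]
    have : (Prod.fst ∘ Prod.mk x : E d → E d) = fun _ => x := rfl
    rw [this]
    have : (Prod.fst ∘ (fun z : E d => (z, z)) : E d → E d) = id := rfl
    rw [this, Measure.map_id, Measure.map_const, hμ.measure_univ, one_smul]
    rfl
  have hsnd : γ.map Prod.snd = μ := by
    rw [hγ, Measure.map_add _ _ measurable_snd, Measure.map_smul, Measure.map_smul,
      hprod, Measure.map_map measurable_snd measurable_prodMk_left,
      Measure.map_map measurable_snd hdiag]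
    have h1 : (Prod.snd ∘ Prod.mk x : E d → E d) = id := rfl
    have h2' : (Prod.snd ∘ (fun z : E d => (z, z)) : E d → E d) = id := rfl
    rw [h1, h2', Measure.map_id, ← add_smul, hab, one_smul]
  -- the transport cost
  have hcont : Continuous (fun p : E d × E d => ‖p.1 - p.2‖ ^ 2) := by fun_prop
  have hint1 : Integrable (fun p : E d × E d => ‖p.1 - p.2‖ ^ 2) (μ.map (Prod.mk x)) := by
    rw [integrable_map_measure hcont.aestronglyMeasurable measurable_prodMk_left.aemeasurable]
    exact integrable_sub_sq x h2
  have hint2 : Integrable (fun p : E d × E d => ‖p.1 - p.2‖ ^ 2) (μ.map (fun z => (z, z))) := by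
    rw [integrable_map_measure hcont.aestronglyMeasurable hdiag.aemeasurable]
    have : ((fun p : E d × E d => ‖p.1 - p.2‖ ^ 2) ∘ fun z => (z, z)) = fun _ => (0:ℝ) := by
      funext z; simp
    rw [this]; exact integrable_const 0
  have hcost : (∫ p, ‖p.1 - p.2‖ ^ 2 ∂γ) = ε * ∫ z, ‖x - z‖ ^ 2 ∂μ := by
    rw [hγ, hprod, integral_add_measure (hint1.smul_measure ENNReal.ofReal_ne_top)
      (hint2.smul_measure ENNReal.ofReal_ne_top), integral_smul_measure, integral_smul_measure,
      integral_map measurable_prodMk_left.aemeasurable hcont.aestronglyMeasurable,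
      integral_map hdiag.aemeasurable hcont.aestronglyMeasurable]
    simp [ha, hb, ENNReal.toReal_ofReal hε.1]
  have hmem : Real.sqrt (ε * ∫ z, ‖x - z‖ ^ 2 ∂μ) ∈
      { r | ∃ γ : Measure (E d × E d), IsProbabilityMeasure γ ∧
        γ.map Prod.fst = mix ε x μ ∧ γ.map Prod.snd = μ ∧
        r = (∫ p, ‖p.1 - p.2‖ ^ 2 ∂γ) ^ (1 / 2 : ℝ) } := by
    refine ⟨γ, hγprob, hfst, hsnd, ?_⟩
    rw [hcost, Real.sqrt_eq_rpow]
  exact csInf_le ⟨0, fun r hr => by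
    obtain ⟨γ', _, _, _, rfl⟩ := hr
    exact Real.rpow_nonneg (integral_nonneg fun p => by positivity) _⟩ hmem

section Mono

variable {d : ℕ} (g : E d → Measure (E d) → ℝ) (Dg : E d → Measure (E d) → E d) (K : ℝ)

/-- Displacement monotonicity implies pointwise monotonicity of `Dg (·, μ)` at a fixed
measure with ε-perturbed laws. -/
lemma mono_perturbed
    (hmono : ∀ (Ω : Type) (_ : MeasurableSpace Ω) (P : Measure Ω),
      IsProbabilityMeasure P →
      ∀ X₁ X₂ : Ω → E d, Measurable X₁ → Measurable X₂ →
        MemLp X₁ 2 P → MemLp X₂ 2 P →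
        0 ≤ ∫ ω, ⟪Dg (X₁ ω) (P.map X₁) - Dg (X₂ ω) (P.map X₂), X₁ ω - X₂ ω⟫ ∂P)
    (μ : Measure (E d)) (hμ : IsProbabilityMeasure μ) (h2 : FiniteSecondMoment μ)
    {ε : ℝ} (hε : ε ∈ Set.Ioo (0:ℝ) 1) (x y : E d) :
    0 ≤ ⟪Dg x (mix ε x μ) - Dg y (mix ε y μ), x - y⟫ := by
  classical
  set a := ENNReal.ofReal ε with ha
  set b := ENNReal.ofReal (1 - ε) with hb
  have hab : a + b = 1 := by
    rw [ha, hb, ← ENNReal.ofReal_add hε.1.le (by linarith [hε.2.le])]; norm_num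
  set j0 : E d → E d × ℝ := fun z => (z, 0) with hj0
  set j1 : E d → E d × ℝ := fun z => (z, 1) with hj1
  have hj0m : Measurable j0 := measurable_id.prodMk measurable_const
  have hj1m : Measurable j1 := measurable_id.prodMk measurable_const
  set P : Measure (E d × ℝ) := a • μ.map j0 + b • μ.map j1 with hP
  have hPprob : IsProbabilityMeasure P := by
    constructor
    rw [hP]
    simp [Measure.add_apply, Measure.smul_apply,
      Measure.map_apply hj0m MeasurableSet.univ, Measure.map_apply hj1m MeasurableSet.univ,
      hμ.measure_univ, smul_eq_mul, mul_one, hab]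
  set X₁ : E d × ℝ → E d := fun p => if p.2 = 0 then x else p.1 with hX₁
  set X₂ : E d × ℝ → E d := fun p => if p.2 = 0 then y else p.1 with hX₂
  have hs : MeasurableSet {p : E d × ℝ | p.2 = 0} :=
    measurable_snd (measurableSet_singleton 0)
  have hX₁m : Measurable X₁ := Measurable.ite hs measurable_const measurable_fst
  have hX₂m : Measurable X₂ := Measurable.ite hs measurable_const measurable_fst
  have hmapX : ∀ (c : E d) (X : E d × ℝ → E d), Measurable X →
      (∀ z : E d, X (j0 z) = c) → (∀ z : E d, X (j1 z) = z) → P.map X = mix ε c μ := by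
    intro c X hXm h0 h1
    rw [hP, Measure.map_add _ _ hXm, Measure.map_smul, Measure.map_smul,
      Measure.map_map hXm hj0m, Measure.map_map hXm hj1m]
    have e0 : X ∘ j0 = fun _ => c := funext h0
    have e1 : X ∘ j1 = id := funext h1
    rw [e0, e1, Measure.map_id, Measure.map_const, hμ.measure_univ, one_smul]
    rfl
  have hmap₁ : P.map X₁ = mix ε x μ := by
    refine hmapX x X₁ hX₁m (fun z => by simp [hX₁, hj0]) (fun z => by simp [hX₁, hj1])
  have hmap₂ : P.map X₂ = mix ε y μ := by
    refine hmapX y X₂ hX₂m (fun z => by simp [hX₂, hj0]) (fun z => by simp [hX₂, hj1])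
  -- MemLp
  have hmemX : ∀ (c : E d) (X : E d × ℝ → E d), Measurable X →
      (∀ z : E d, X (j0 z) = c) → (∀ z : E d, X (j1 z) = z) → MemLp X 2 P := by
    intro c X hXm h0 h1
    rw [memLp_two_iff_integrable_sq_norm hXm.aestronglyMeasurable]
    refine Integrable.add_measure ?_ ?_
    · refine Integrable.smul_measure ?_ ENNReal.ofReal_ne_top
      rw [integrable_map_measure ((hXm.norm.pow_const 2).aestronglyMeasurable)
        hj0m.aemeasurable]
      have : ((fun p => ‖X p‖ ^ 2) ∘ j0) = fun _ : E d => ‖c‖ ^ 2 := by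
        funext z; simp [Function.comp, h0 z]
      rw [this]; exact integrable_const _
    · refine Integrable.smul_measure ?_ ENNReal.ofReal_ne_top
      rw [integrable_map_measure ((hXm.norm.pow_const 2).aestronglyMeasurable)
        hj1m.aemeasurable]
      have : ((fun p => ‖X p‖ ^ 2) ∘ j1) = fun z : E d => ‖z‖ ^ 2 := by
        funext z; simp [Function.comp, h1 z]
      rw [this]; exact h2
  have hmem₁ : MemLp X₁ 2 P :=
    hmemX x X₁ hX₁m (fun z => by simp [hX₁, hj0]) (fun z => by simp [hX₁, hj1])
  have hmem₂ : MemLp X₂ 2 P :=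
    hmemX y X₂ hX₂m (fun z => by simp [hX₂, hj0]) (fun z => by simp [hX₂, hj1])
  have key := hmono (E d × ℝ) inferInstance P hPprob X₁ X₂ hX₁m hX₂m hmem₁ hmem₂
  rw [hmap₁, hmap₂] at key
  set c : ℝ := ⟪Dg x (mix ε x μ) - Dg y (mix ε y μ), x - y⟫ with hc
  have hfun : (fun ω : E d × ℝ =>
      ⟪Dg (X₁ ω) (mix ε x μ) - Dg (X₂ ω) (mix ε y μ), X₁ ω - X₂ ω⟫)
      = fun ω => if ω.2 = 0 then c else 0 := by
    funext ω
    by_cases h : ω.2 = 0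
    · simp [hX₁, hX₂, h, hc]
    · simp [hX₁, hX₂, h]
  rw [hfun] at key
  have hind : Measurable (fun ω : E d × ℝ => if ω.2 = 0 then c else 0) :=
    Measurable.ite hs measurable_const measurable_const
  have hi0 : Integrable (fun ω : E d × ℝ => if ω.2 = 0 then c else 0) (μ.map j0) := by
    rw [integrable_map_measure hind.aestronglyMeasurable hj0m.aemeasurable]
    have : ((fun ω : E d × ℝ => if ω.2 = 0 then c else 0) ∘ j0) = fun _ : E d => c := by
      funext z; simp [hj0]
    rw [this]; exact integrable_const _
  have hi1 : Integrable (fun ω : E d × ℝ => if ω.2 = 0 then c else 0) (μ.map j1) := by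
    rw [integrable_map_measure hind.aestronglyMeasurable hj1m.aemeasurable]
    have : ((fun ω : E d × ℝ => if ω.2 = 0 then c else 0) ∘ j1) = fun _ : E d => (0:ℝ) := by
      funext z; simp [hj1]
    rw [this]; exact integrable_const _
  have hval : (∫ ω, (if ω.2 = 0 then c else 0) ∂P) = ε * c := by
    rw [hP, integral_add_measure (hi0.smul_measure ENNReal.ofReal_ne_top)
      (hi1.smul_measure ENNReal.ofReal_ne_top), integral_smul_measure, integral_smul_measure,
      integral_map hj0m.aemeasurable hind.aestronglyMeasurable,
      integral_map hj1m.aemeasurable hind.aestronglyMeasurable]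
    simp [hj0, hj1, ha, hb, ENNReal.toReal_ofReal hε.1.le, integral_const, hμ.measure_univ]
  rw [hval] at key
  exact nonneg_of_mul_nonneg_right key hε.1

/-- Monotonicity of `Dg (·, μ)` at a fixed measure. -/
lemma mono_fixed
    (hLip : ∀ (x y : E d) (μ ν : Measure (E d)),
      IsProbabilityMeasure μ → FiniteSecondMoment μ →
      IsProbabilityMeasure ν → FiniteSecondMoment ν →
      ‖Dg x μ - Dg y ν‖ ≤ K * (‖x - y‖ + W2 μ ν))
    (hmono : ∀ (Ω : Type) (_ : MeasurableSpace Ω) (P : Measure Ω),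
      IsProbabilityMeasure P →
      ∀ X₁ X₂ : Ω → E d, Measurable X₁ → Measurable X₂ →
        MemLp X₁ 2 P → MemLp X₂ 2 P →
        0 ≤ ∫ ω, ⟪Dg (X₁ ω) (P.map X₁) - Dg (X₂ ω) (P.map X₂), X₁ ω - X₂ ω⟫ ∂P)
    (μ : Measure (E d)) (hμ : IsProbabilityMeasure μ) (h2 : FiniteSecondMoment μ)
    (x y : E d) : 0 ≤ ⟪Dg x μ - Dg y μ, x - y⟫ := by
  classical
  set K' : ℝ := max K 0 with hK'
  have hK'0 : 0 ≤ K' := le_max_right _ _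
  set Cx : ℝ := ∫ z, ‖x - z‖ ^ 2 ∂μ with hCx
  set Cy : ℝ := ∫ z, ‖y - z‖ ^ 2 ∂μ with hCy
  have hCx0 : 0 ≤ Cx := integral_nonneg fun z => by positivity
  have hCy0 : 0 ≤ Cy := integral_nonneg fun z => by positivity
  set M : ℝ := K' * (Real.sqrt Cx + Real.sqrt Cy) * ‖x - y‖ with hM
  have hM0 : 0 ≤ M := by positivity
  -- the key estimate for every small ε
  have hest : ∀ ε ∈ Set.Ioo (0:ℝ) 1, -(Real.sqrt ε * M) ≤ ⟪Dg x μ - Dg y μ, x - y⟫ := by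
    intro ε hε
    have hεIcc : ε ∈ Set.Icc (0:ℝ) 1 := ⟨hε.1.le, hε.2.le⟩
    have hmixx : IsProbabilityMeasure (mix ε x μ) := mix_prob hεIcc x hμ
    have hmixy : IsProbabilityMeasure (mix ε y μ) := mix_prob hεIcc y hμ
    have hmixx2 : FiniteSecondMoment (mix ε x μ) := mix_fsm x h2
    have hmixy2 : FiniteSecondMoment (mix ε y μ) := mix_fsm y h2
    have hbx : ‖Dg x (mix ε x μ) - Dg x μ‖ ≤ K' * Real.sqrt (ε * Cx) := by
      have h1 := hLip x x (mix ε x μ) μ hmixx hmixx2 hμ h2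
      simp only [sub_self, norm_zero, zero_add] at h1
      calc ‖Dg x (mix ε x μ) - Dg x μ‖ ≤ K * W2 (mix ε x μ) μ := h1
        _ ≤ K' * W2 (mix ε x μ) μ :=
          mul_le_mul_of_nonneg_right (le_max_left _ _) (W2_nonneg _ _)
        _ ≤ K' * Real.sqrt (ε * Cx) :=
          mul_le_mul_of_nonneg_left (W2_mix_le hεIcc x hμ h2) hK'0
    have hby : ‖Dg y (mix ε y μ) - Dg y μ‖ ≤ K' * Real.sqrt (ε * Cy) := by
      have h1 := hLip y y (mix ε y μ) μ hmixy hmixy2 hμ h2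
      simp only [sub_self, norm_zero, zero_add] at h1
      calc ‖Dg y (mix ε y μ) - Dg y μ‖ ≤ K * W2 (mix ε y μ) μ := h1
        _ ≤ K' * W2 (mix ε y μ) μ :=
          mul_le_mul_of_nonneg_right (le_max_left _ _) (W2_nonneg _ _)
        _ ≤ K' * Real.sqrt (ε * Cy) :=
          mul_le_mul_of_nonneg_left (W2_mix_le hεIcc y hμ h2) hK'0
    have hcε := mono_perturbed Dg hmono μ hμ h2 hε x y
    -- compare the two inner products
    have hdiff : ⟪Dg x (mix ε x μ) - Dg y (mix ε y μ), x - y⟫ - ⟪Dg x μ - Dg y μ, x - y⟫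
        = ⟪(Dg x (mix ε x μ) - Dg x μ) - (Dg y (mix ε y μ) - Dg y μ), x - y⟫ := by
      rw [← inner_sub_left]
      congr 1
      abel
    have habs : ⟪Dg x (mix ε x μ) - Dg y (mix ε y μ), x - y⟫ - ⟪Dg x μ - Dg y μ, x - y⟫
        ≤ Real.sqrt ε * M := by
      rw [hdiff]
      calc ⟪(Dg x (mix ε x μ) - Dg x μ) - (Dg y (mix ε y μ) - Dg y μ), x - y⟫
          ≤ ‖(Dg x (mix ε x μ) - Dg x μ) - (Dg y (mix ε y μ) - Dg y μ)‖ * ‖x - y‖ :=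
            real_inner_le_norm _ _
        _ ≤ (‖Dg x (mix ε x μ) - Dg x μ‖ + ‖Dg y (mix ε y μ) - Dg y μ‖) * ‖x - y‖ :=
            mul_le_mul_of_nonneg_right (norm_sub_le _ _) (norm_nonneg _)
        _ ≤ (K' * Real.sqrt (ε * Cx) + K' * Real.sqrt (ε * Cy)) * ‖x - y‖ :=
            mul_le_mul_of_nonneg_right (add_le_add hbx hby) (norm_nonneg _)
        _ = Real.sqrt ε * M := by
            rw [Real.sqrt_mul hε.1.le, Real.sqrt_mul hε.1.le, hM]
            ring
    linarith
  -- pass to the limit ε → 0⁺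
  have hlim : Tendsto (fun ε : ℝ => -(Real.sqrt ε * M)) (𝓝[>] (0:ℝ)) (𝓝 0) := by
    have : Tendsto (fun ε : ℝ => -(Real.sqrt ε * M)) (𝓝 (0:ℝ)) (𝓝 (-(Real.sqrt 0 * M))) := by
      exact ((Real.continuous_sqrt.tendsto 0).mul tendsto_const_nhds).neg
    simpa using this.mono_left nhdsWithin_le_nhds
  refine le_of_tendsto hlim ?_
  filter_upwards [Ioo_mem_nhdsGT_of_mem (Set.mem_Ico.mpr ⟨le_refl 0, one_pos⟩)] with ε hε
  exact hest ε hε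

end Mono

theorem displacement_monotone_implies_convex'
    (d : ℕ) (g : E d → Measure (E d) → ℝ) (Dg : E d → Measure (E d) → E d) (K : ℝ)
    (hgrad : ∀ (μ : Measure (E d)), IsProbabilityMeasure μ → FiniteSecondMoment μ →
      ∀ x : E d, HasGradientAt (fun y => g y μ) (Dg x μ) x)
    (hLip : ∀ (x y : E d) (μ ν : Measure (E d)),
      IsProbabilityMeasure μ → FiniteSecondMoment μ →
      IsProbabilityMeasure ν → FiniteSecondMoment ν →
      ‖Dg x μ - Dg y ν‖ ≤ K * (‖x - y‖ + W2 μ ν))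
    (hmono : ∀ (Ω : Type) (_ : MeasurableSpace Ω) (P : Measure Ω),
      IsProbabilityMeasure P →
      ∀ X₁ X₂ : Ω → E d, Measurable X₁ → Measurable X₂ →
        MemLp X₁ 2 P → MemLp X₂ 2 P →
        0 ≤ ∫ ω, ⟪Dg (X₁ ω) (P.map X₁) - Dg (X₂ ω) (P.map X₂), X₁ ω - X₂ ω⟫ ∂P) :
    ∀ μ : Measure (E d), IsProbabilityMeasure μ → FiniteSecondMoment μ →
      ConvexOn ℝ Set.univ (fun x => g x μ) := by
  intro μ hμ h2
  have hmonoD : ∀ x y : E d, 0 ≤ ⟪Dg x μ - Dg y μ, x - y⟫ :=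
    mono_fixed Dg K hLip hmono μ hμ h2
  refine ⟨convex_univ, ?_⟩
  intro p _ q _ a b ha hb hab
  set v : E d := q - p with hv
  set φ : ℝ → ℝ := fun t => g (p + t • v) μ with hφ
  have hφderiv : ∀ t : ℝ, HasDerivAt φ (⟪Dg (p + t • v) μ, v⟫) t := by
    intro t
    have hL : HasDerivAt (fun t : ℝ => p + t • v) v t := by
      simpa using ((hasDerivAt_id t).smul_const v).const_add p
    have hg' := hgrad μ hμ h2 (p + t • v)
    rw [hasGradientAt_iff_hasFDerivAt] at hg'
    have := hg'.comp_hasDerivAt t hL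
    simp [Function.comp, InnerProductSpace.toDual_apply_apply] at this
    exact this
  have hmonoderiv : MonotoneOn (deriv φ) (interior Set.univ) := by
    rw [interior_univ]
    intro s _ t _ hst
    rw [(hφderiv s).deriv, (hφderiv t).deriv]
    have h := hmonoD (p + t • v) (p + s • v)
    have hsub : (p + t • v) - (p + s • v) = (t - s) • v := by
      rw [add_sub_add_left_eq_sub, ← sub_smul]
    rw [hsub, real_inner_smul_right, inner_sub_left] at h
    rcases eq_or_lt_of_le hst with rfl | hlt
    · exact le_refl _
    · nlinarith [h]
  have hφconv : ConvexOn ℝ Set.univ φ := by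
    refine MonotoneOn.convexOn_of_deriv convex_univ ?_ ?_ hmonoderiv
    · exact fun t _ => ((hφderiv t).continuousAt).continuousWithinAt
    · rw [interior_univ]
      exact fun t _ => ((hφderiv t).differentiableAt).differentiableWithinAt
  have hkey := hφconv.2 (Set.mem_univ (0:ℝ)) (Set.mem_univ (1:ℝ)) ha hb hab
  have e1 : a • (0:ℝ) + b • (1:ℝ) = b := by simp
  rw [e1] at hkey
  have harg : a • p + b • q = p + b • v := by
    rw [hv]
    have haa : a = 1 - b := by linarith
    rw [haa]
    module
  have e2 : φ b = g (a • p + b • q) μ := by rw [harg]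
  have e3 : φ 0 = g p μ := by simp [hφ]
  have e4 : φ 1 = g q μ := by simp [hφ, hv]
  rw [e2, e3, e4] at hkey
  simpa using hkey

/-- If `g : ℝ^d × P₂(ℝ^d) → ℝ` has a spatial gradient `Dg` that is
Lipschitz on `ℝ^d × P₂(ℝ^d)` (with the `W₂` distance on measures), and `g` is
displacement monotone, then for every `μ ∈ P₂(ℝ^d)` the map `x ↦ g x μ` is convex. -/
theorem displacement_monotone_implies_convex
    (d : ℕ) (g : E d → Measure (E d) → ℝ) (Dg : E d → Measure (E d) → E d) (K : ℝ)
    -- `Dg` is the gradient of `g` in the `x`-variable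
    (hgrad : ∀ (μ : Measure (E d)), IsProbabilityMeasure μ → FiniteSecondMoment μ →
      ∀ x : E d, HasGradientAt (fun y => g y μ) (Dg x μ) x)
    -- `Dg` is Lipschitz continuous on `ℝ^d × P₂(ℝ^d)`
    (hLip : ∀ (x y : E d) (μ ν : Measure (E d)),
      IsProbabilityMeasure μ → FiniteSecondMoment μ →
      IsProbabilityMeasure ν → FiniteSecondMoment ν →
      ‖Dg x μ - Dg y ν‖ ≤ K * (‖x - y‖ + W2 μ ν))
    -- displacement monotonicity of `g`
    (hmono : ∀ (Ω : Type) (_ : MeasurableSpace Ω) (P : Measure Ω),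
      IsProbabilityMeasure P →
      ∀ X₁ X₂ : Ω → E d, Measurable X₁ → Measurable X₂ →
        MemLp X₁ 2 P → MemLp X₂ 2 P →
        0 ≤ ∫ ω, ⟪Dg (X₁ ω) (P.map X₁) - Dg (X₂ ω) (P.map X₂), X₁ ω - X₂ ω⟫ ∂P) :
    ∀ μ : Measure (E d), IsProbabilityMeasure μ → FiniteSecondMoment μ →
      ConvexOn ℝ Set.univ (fun x => g x μ) :=
  displacement_monotone_implies_convex' d g Dg K hgrad hLip hmono
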